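/- Let p be a prime and let f ∈ F_p[x,y,z] be a homogeneous cubic defining an elliptic curve C ⊆ P²_{F_p}. Then C is ordinary if and only if f has level one, i.e., if and only if I_1(f^{p−1}) is the unit ideal of F_p[x,y,z]. -/

import Mathlib

open MvPolynomial

/-- `J^[q]`: the ideal generated by the `q`-th powers of the elements of `J`. -/
def bracketPow {R : Type*} [CommRing R] (q : ℕ) (J : Ideal R) : Ideal R :=
  Ideal.span ((fun a => a ^ q) '' (J : Set R))

/-- `I_e(g)` (for the prime `p`): the smallest ideal `J` with `g ∈ J^[p^e]`. -/
def rootIdeal {R : Type*} [CommRing R] (p e : ℕ) (g : R) : Ideal R :=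
  sInf {J : Ideal R | g ∈ bracketPow (p ^ e) J}

/-- `f` has level `e`: `e` is the least integer `≥ 1` such that
`f^(p^e - p) ∈ (I_e(f^(p^e - 1)))^[p^e]`. -/
def HasLevel {R : Type*} [CommRing R] (p : ℕ) (f : R) (e : ℕ) : Prop :=
  IsLeast {e' : ℕ | 1 ≤ e' ∧
    f ^ (p ^ e' - p) ∈ bracketPow (p ^ e') (rootIdeal p e' (f ^ (p ^ e' - 1)))} e

/-- The exponent vector `(r, s, t)` of a monomial in three variables. -/
noncomputable def expv (r s t : ℕ) : Fin 3 →₀ ℕ := Finsupp.equivFunOnFinite.symm ![r, s, t]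

section Aux

variable (p : ℕ) [Fact p.Prime]

/-- The exponent vector `(p-1, p-1, p-1)`. -/
noncomputable def pm1v : Fin 3 →₀ ℕ := expv (p - 1) (p - 1) (p - 1)

lemma pm1v_apply (i : Fin 3) : pm1v p i = p - 1 := by
  show (Finsupp.equivFunOnFinite.symm ![p-1, p-1, p-1]) i = p - 1
  rw [Finsupp.coe_equivFunOnFinite_symm]
  fin_cases i <;> rfl

lemma shift_inj : Function.Injective (fun e : Fin 3 →₀ ℕ => p • e + pm1v p) := by
  intro a b h
  ext i
  have h2 := DFunLike.congr_fun h i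
  simp only [Finsupp.add_apply, Finsupp.smul_apply, smul_eq_mul] at h2
  have hp : 0 < p := (Fact.out : p.Prime).pos
  have : p * a i = p * b i := by omega
  exact Nat.eq_of_mul_eq_mul_left hp this

/-- The trace-type projection `T`: `coeff e (T g) = coeff (p•e + (p-1,p-1,p-1)) g`. -/
noncomputable def Tm (g : MvPolynomial (Fin 3) (ZMod p)) : MvPolynomial (Fin 3) (ZMod p) :=
  AddMonoidAlgebra.ofCoeff (Finsupp.comapDomain (fun e => p • e + pm1v p) (AddMonoidAlgebra.coeff g) ((shift_inj p).injOn))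

lemma coeff_Tm (g : MvPolynomial (Fin 3) (ZMod p)) (e : Fin 3 →₀ ℕ) :
    coeff e (Tm p g) = coeff (p • e + pm1v p) g :=
  Finsupp.comapDomain_apply _ _ _ _

lemma Tm_zero : Tm p 0 = 0 := by
  ext e; rw [coeff_Tm]; simp

lemma Tm_add (a b : MvPolynomial (Fin 3) (ZMod p)) : Tm p (a + b) = Tm p a + Tm p b := by
  ext e; rw [coeff_add, coeff_Tm, coeff_Tm, coeff_Tm, coeff_add]

lemma smul_le_iff (u e : Fin 3 →₀ ℕ) : p • u ≤ p • e + pm1v p ↔ u ≤ e := by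
  have hp : 0 < p := (Fact.out : p.Prime).pos
  rw [Finsupp.le_def, Finsupp.le_def]
  apply forall_congr'
  intro i
  simp only [Finsupp.add_apply, Finsupp.smul_apply, smul_eq_mul, pm1v_apply]
  constructor
  · intro h
    have : p * u i < p * (e i + 1) := by
      have : p * u i < p * e i + p := by omega
      simpa [Nat.mul_add] using this
    exact Nat.lt_succ_iff.mp (Nat.lt_of_mul_lt_mul_left this)
  · intro h
    have : p * u i ≤ p * e i := Nat.mul_le_mul_left p h
    omega

lemma Tm_pow_mul (a b : MvPolynomial (Fin 3) (ZMod p)) :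
    Tm p (a ^ p * b) = a * Tm p b := by
  induction a using MvPolynomial.induction_on' with
  | add a1 a2 ih1 ih2 =>
    have hchar : (a1 + a2) ^ p = a1 ^ p + a2 ^ p := add_pow_char _ _ _
    rw [hchar, add_mul, Tm_add, ih1, ih2, add_mul]
  | monomial u c =>
    rw [monomial_pow, ZMod.pow_card]
    ext e
    rw [coeff_Tm, coeff_monomial_mul', coeff_monomial_mul']
    by_cases h : u ≤ e
    · rw [if_pos ((smul_le_iff p u e).mpr h), if_pos h, coeff_Tm]
      congr 2
      ext i
      have hui : u i ≤ e i := h i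
      obtain ⟨k, hk⟩ := Nat.exists_eq_add_of_le hui
      simp only [Finsupp.tsub_apply, Finsupp.add_apply, Finsupp.smul_apply, smul_eq_mul,
        pm1v_apply]
      rw [hk, Nat.add_sub_cancel_left, Nat.mul_add, add_assoc, Nat.add_sub_cancel_left]
    · rw [if_neg (fun hc => h ((smul_le_iff p u e).mp hc)), if_neg h]

lemma degree_fin3 (d : Fin 3 →₀ ℕ) : d.degree = ∑ i : Fin 3, d i :=
  Finset.sum_subset (Finset.subset_univ _)
    (fun i _ hi => Finsupp.notMem_support_iff.mp hi)

lemma Tm_homog (g : MvPolynomial (Fin 3) (ZMod p)) (h : g.IsHomogeneous (3 * (p - 1))) :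
    Tm p g = C (coeff (pm1v p) g) := by
  have hp : 0 < p := (Fact.out : p.Prime).pos
  ext e
  rw [coeff_Tm, coeff_C]
  by_cases he : e = 0
  · subst he
    rw [if_pos rfl]
    congr 1
    simp
  · rw [if_neg (fun hc => he hc.symm)]
    apply h.coeff_eq_zero
    rw [degree_fin3]
    have hsum : ∑ i : Fin 3, (p • e + pm1v p) i = p * (∑ i : Fin 3, e i) + 3 * (p - 1) := by
      rw [Fin.sum_univ_three, Fin.sum_univ_three]
      simp only [Finsupp.add_apply, Finsupp.smul_apply, smul_eq_mul, pm1v_apply]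
      ring
    rw [hsum]
    intro hcontra
    have hzero : p * (∑ i : Fin 3, e i) = 0 := by omega
    have hzero2 : (∑ i : Fin 3, e i) = 0 := by
      rcases Nat.mul_eq_zero.mp hzero with h' | h'
      · omega
      · exact h'
    apply he
    ext i
    have := Finset.sum_eq_zero_iff.mp hzero2 i (Finset.mem_univ i)
    simpa using this

lemma Tm_mem (J : Ideal (MvPolynomial (Fin 3) (ZMod p)))
    (g : MvPolynomial (Fin 3) (ZMod p)) (hg : g ∈ bracketPow p J) :
    Tm p g ∈ J := by
  have key : ∀ u ∈ bracketPow p J, ∀ r, Tm p (r * u) ∈ J := by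
    intro u hu
    refine Submodule.span_induction ?_ ?_ ?_ ?_ hu
    · rintro x ⟨h, hh, rfl⟩ r
      rw [mul_comm, Tm_pow_mul]
      exact Ideal.mul_mem_right _ _ hh
    · intro r
      rw [mul_zero, Tm_zero]
      exact J.zero_mem
    · intro x y _ _ ihx ihy r
      rw [mul_add, Tm_add]
      exact J.add_mem (ihx r) (ihy r)
    · intro c x _ ih r
      rw [smul_eq_mul, ← mul_assoc]
      exact ih (r * c)
  have := key g hg 1
  rwa [one_mul] at this

end Aux

/-- An elliptic curve `C ⊆ ℙ²` over `𝔽_p` defined by a homogeneous cubic `f` is ordinary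
(the coefficient of `(xyz)^(p-1)` in `f^(p-1)` is nonzero) if and only if `f` has level one,
i.e. `I_1(f^(p-1))` is the unit ideal. -/
theorem stmt_0 (p : ℕ) [Fact p.Prime]
    (f : MvPolynomial (Fin 3) (ZMod p))
    (hcubic : f.IsHomogeneous 3)
    (hsmooth : ∀ x : Fin 3 → AlgebraicClosure (ZMod p),
      eval x (map (algebraMap (ZMod p) (AlgebraicClosure (ZMod p))) f) = 0 →
      (∀ i, eval x (map (algebraMap (ZMod p) (AlgebraicClosure (ZMod p))) (pderiv i f)) = 0) →
      x = 0) :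
    coeff (expv (p - 1) (p - 1) (p - 1)) (f ^ (p - 1)) ≠ 0 ↔
      rootIdeal p 1 (f ^ (p - 1)) = ⊤ := by
  have hp : 0 < p := (Fact.out : p.Prime).pos
  set g := f ^ (p - 1) with hgdef
  have hgh : g.IsHomogeneous (3 * (p - 1)) := hcubic.pow (p - 1)
  have hpm : expv (p - 1) (p - 1) (p - 1) = pm1v p := rfl
  rw [hpm]
  constructor
  · intro hc
    rw [rootIdeal, sInf_eq_top]
    intro J hJ
    simp only [Set.mem_setOf_eq, pow_one] at hJ
    have hT : Tm p g ∈ J := Tm_mem p J g hJ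
    rw [Tm_homog p g hgh] at hT
    exact Ideal.eq_top_of_isUnit_mem _ hT ((isUnit_iff_ne_zero.mpr hc).map C)
  · intro htop
    by_contra hc
    set M : Ideal (MvPolynomial (Fin 3) (ZMod p)) := RingHom.ker constantCoeff with hMdef
    have hM : M ≠ ⊤ := by
      intro h
      have h1 : (1 : MvPolynomial (Fin 3) (ZMod p)) ∈ M := h ▸ Submodule.mem_top
      rw [hMdef, RingHom.mem_ker, map_one] at h1
      exact one_ne_zero h1
    have hgM : g ∈ bracketPow (p ^ 1) M := by
      rw [pow_one]
      have hsum : (∑ d ∈ g.support, monomial d (coeff d g)) ∈ bracketPow p M := by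
        apply Ideal.sum_mem
        intro d hd
        have hdne : coeff d g ≠ 0 := mem_support_iff.mp hd
        -- some exponent is ≥ p
        have hex : ∃ i, p ≤ d i := by
          by_contra hno
          push_neg at hno
          have hdeg : d.degree = 3 * (p - 1) := by
            by_contra h'
            exact hdne (hgh.coeff_eq_zero h')
          rw [degree_fin3, Fin.sum_univ_three] at hdeg
          have h0 : d 0 ≤ p - 1 := by have := hno 0; omega
          have h1 : d 1 ≤ p - 1 := by have := hno 1; omega
          have h2 : d 2 ≤ p - 1 := by have := hno 2; omega
          have hd0 : d 0 = p - 1 := by omega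
          have hd1 : d 1 = p - 1 := by omega
          have hd2 : d 2 = p - 1 := by omega
          have : d = pm1v p := by
            ext i
            rw [pm1v_apply]
            fin_cases i <;> assumption
          rw [this] at hdne
          exact hdne hc
        obtain ⟨i, hi⟩ := hex
        have hle : Finsupp.single i p ≤ d := Finsupp.single_le_iff.mpr hi
        have hXmem : (X i : MvPolynomial (Fin 3) (ZMod p)) ^ p ∈ bracketPow p M := by
          apply Ideal.subset_span
          exact ⟨X i, by rw [SetLike.mem_coe, hMdef, RingHom.mem_ker, constantCoeff_X], rfl⟩
        have heq : monomial d (coeff d g) =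
            monomial (d - Finsupp.single i p) (coeff d g) * X i ^ p := by
          rw [X_pow_eq_monomial, monomial_mul, mul_one, tsub_add_cancel_of_le hle]
        rw [heq]
        exact Ideal.mul_mem_left _ _ hXmem
      rwa [← g.as_sum] at hsum
    have hle : rootIdeal p 1 g ≤ M := sInf_le hgM
    rw [htop] at hle
    exact hM (top_le_iff.mp hle)
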